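/- arXiv:1705.03597 — 2 statements merged into one kernel-verified Lean document; each statement's English description precedes it below -/
import Mathlib

section
/- Consider a finite-horizon multi-objective MDP with finite nonempty state type S, finite nonempty action type A, transition probabilities p, rewards R : Fin L → S → A → ℝ, and horizon T, with V*, Q, and restricted action sets A_i given by the FLMDP backward recursion. Let π be a deterministic Markov policy, t < T, s a state, and 1 ≤ i < L. Suppose V^π_j(t+1, s') = V*_j(t+1, s') for every state s' and every j ≤ i+1, and suppose V^π_j(t, s) = V*_j(t, s) for every j ≤ i. Then π_t(s) ∈ A_i(t,s) and V^π_{i+1}(t,s) ≤ V*_{i+1}(t,s). -/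
open Classical

/-- Value functions of a deterministic Markov policy `pol` in a finite-horizon
multi-objective MDP, by backward recursion: `V^π_i(T,s) = 0` and, for `t < T`,
`V^π_i(t,s) = R_i(s, π_t(s)) + ∑_{s'} p s (π_t(s)) s' · V^π_i(t+1,s')`. -/
noncomputable def Vpol {S A : Type*} [Fintype S] (p : S → A → S → ℝ) {L : ℕ}
    (R : Fin L → S → A → ℝ) (T : ℕ) (pol : ℕ → S → A) : ℕ → Fin L → S → ℝ
  | t => fun i s =>
    if h : t < T then
      R i s (pol t s) + ∑ s', p s (pol t s) s' * Vpol p R T pol (t + 1) i s'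
    else 0
  termination_by t => T - t
  decreasing_by omega

/-- The FLMDP optimal value functions `V*`, by backward recursion: `V*_i(T,s) = 0`
and, for `t < T`, `V*_i(t,s) = max_{a ∈ A_{i-1}(t,s)} Q_i(t,s,a)` where
`Q_i(t,s,a) = R_i(s,a) + ∑_{s'} p s a s' · V*_i(t+1,s')`, `A_0(t,s) = A`, and
`A_i(t,s)` is the set of maximizers of `Q_i(t,s,·)` over `A_{i-1}(t,s)`
(indices written 0-based via `Fin L`). -/
noncomputable def Vstar {S A : Type*} [Fintype S] [Fintype A] (p : S → A → S → ℝ) {L : ℕ}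
    (R : Fin L → S → A → ℝ) (T : ℕ) : ℕ → Fin L → S → ℝ
  | t => fun i s =>
    if h : t < T then
      sSup ((fun a => R i s a + ∑ s', p s a s' * Vstar p R T (t + 1) i s') ''
        ↑(Nat.rec (motive := fun _ => S → Finset A) (fun _ => (Finset.univ : Finset A))
            (fun j prev s => (prev s).filter fun a =>
              if hj : j < L then
                ∀ a' ∈ prev s,
                  (R ⟨j, hj⟩ s a' + ∑ s', p s a' s' * Vstar p R T (t + 1) ⟨j, hj⟩ s') ≤
                    (R ⟨j, hj⟩ s a + ∑ s', p s a s' * Vstar p R T (t + 1) ⟨j, hj⟩ s')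
              else True)
            (i : ℕ) s))
    else 0
  termination_by t => T - t
  decreasing_by all_goals omega

/-- The FLMDP state-action values `Q_i(t,s,a) = R_i(s,a) + ∑_{s'} p s a s' · V*_i(t+1,s')`
(0-based `i`). -/
noncomputable def Qstar {S A : Type*} [Fintype S] [Fintype A] (p : S → A → S → ℝ) {L : ℕ}
    (R : Fin L → S → A → ℝ) (T : ℕ) (t : ℕ) (i : Fin L) (s : S) (a : A) : ℝ :=
  R i s a + ∑ s', p s a s' * Vstar p R T (t + 1) i s'

/-- The FLMDP restricted action sets: `A_0(t,s) = A` and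
`A_{j+1}(t,s) = {a ∈ A_j(t,s) : Q_{j+1}(t,s,a) maximal over A_j(t,s)}`
(the `Q` index written 0-based). -/
noncomputable def Aset {S A : Type*} [Fintype S] [Fintype A] (p : S → A → S → ℝ) {L : ℕ}
    (R : Fin L → S → A → ℝ) (T : ℕ) (t : ℕ) : ℕ → S → Finset A
  | 0, _ => Finset.univ
  | j + 1, s =>
    if hj : j < L then
      (Aset p R T t j s).filter fun a =>
        ∀ a' ∈ Aset p R T t j s, Qstar p R T t ⟨j, hj⟩ s a' ≤ Qstar p R T t ⟨j, hj⟩ s a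
    else Aset p R T t j s


section
variable {S A : Type*} [Fintype S] [Fintype A] [Nonempty S] [Nonempty A]
  (p : S → A → S → ℝ) {L : ℕ} (R : Fin L → S → A → ℝ) (T : ℕ)

lemma vpol_eq (pol : ℕ → S → A) (t : ℕ) (ht : t < T) (i : Fin L) (s : S) :
    Vpol p R T pol t i s =
      R i s (pol t s) + ∑ s', p s (pol t s) s' * Vpol p R T pol (t+1) i s' := by
  rw [Vpol]; simp [ht]

lemma aset_rec (t : ℕ) : ∀ (j : ℕ),
    (Nat.rec (motive := fun _ => S → Finset A) (fun _ => (Finset.univ : Finset A))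
      (fun j prev s => (prev s).filter fun a =>
        if hj : j < L then
          ∀ a' ∈ prev s,
            (R ⟨j, hj⟩ s a' + ∑ s', p s a' s' * Vstar p R T (t + 1) ⟨j, hj⟩ s') ≤
              (R ⟨j, hj⟩ s a + ∑ s', p s a s' * Vstar p R T (t + 1) ⟨j, hj⟩ s')
        else True) j) = fun s => Aset p R T t j s
  | 0 => rfl
  | j+1 => by
      funext s
      show Finset.filter _ _ = _
      rw [aset_rec t j, Aset]
      by_cases hj : j < L
      · simp only [hj, dif_pos, Qstar]
        ext a
        rw [Finset.mem_filter]
        exact Iff.symm Finset.mem_filter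
      · simp [hj]

lemma vstar_eq (t : ℕ) (ht : t < T) (i : Fin L) (s : S) :
    Vstar p R T t i s =
      sSup (Qstar p R T t i s '' ↑(Aset p R T t (i:ℕ) s)) := by
  rw [Vstar]
  simp only [ht, dif_pos, aset_rec p R T t (i:ℕ)]
  rfl

end

section
variable {S A : Type*} [Fintype S] [Fintype A] [Nonempty S] [Nonempty A]
  (p : S → A → S → ℝ) {L : ℕ} (R : Fin L → S → A → ℝ) (T : ℕ)

lemma aset_nonempty (t : ℕ) : ∀ (j : ℕ) (s : S), (Aset p R T t j s).Nonempty
  | 0, s => Finset.univ_nonempty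
  | j+1, s => by
      rw [Aset]
      by_cases hj : j < L
      · simp only [hj, dif_pos]
        obtain ⟨a, ha, hmax⟩ := Finset.exists_max_image (Aset p R T t j s)
          (Qstar p R T t ⟨j, hj⟩ s) (aset_nonempty t j s)
        exact ⟨a, Finset.mem_filter.2 ⟨ha, hmax⟩⟩
      · simpa [hj] using aset_nonempty t j s

lemma le_vstar (t : ℕ) (ht : t < T) (i : Fin L) (s : S) {a : A}
    (ha : a ∈ Aset p R T t (i:ℕ) s) :
    Qstar p R T t i s a ≤ Vstar p R T t i s := by
  rw [vstar_eq p R T t ht i s]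
  exact le_csSup ((Set.Finite.image _ (Aset p R T t (i:ℕ) s).finite_toSet).bddAbove)
    ⟨a, ha, rfl⟩
end

/-- indices of the paper are 1-based; here value-function indices are the
0-based `Fin L`, so paper objective `j` is `Fin`-index `j - 1`: if
`V^π_j(t+1,s') = V*_j(t+1,s')` for all states `s'` and all paper indices `j ≤ i+1`
(i.e. `Fin`-indices `≤ i`), and `V^π_j(t,s) = V*_j(t,s)` for all paper indices `j ≤ i`
(i.e. `Fin`-indices `< i`), then `π_t(s) ∈ A_i(t,s)` and
`V^π_{i+1}(t,s) ≤ V*_{i+1}(t,s)` (paper index `i+1` is `Fin`-index `i`). -/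
theorem inductive_step_membership_and_le
    {S A : Type*} [Fintype S] [Fintype A] [Nonempty S] [Nonempty A]
    (p : S → A → S → ℝ)
    (hp0 : ∀ s a s', 0 ≤ p s a s') (hp1 : ∀ s a, ∑ s', p s a s' = 1)
    {L : ℕ} (R : Fin L → S → A → ℝ) (T : ℕ)
    (pol : ℕ → S → A) (t : ℕ) (ht : t < T) (s : S)
    (i : ℕ) (hi1 : 1 ≤ i) (hiL : i < L)
    (hnext : ∀ j : Fin L, (j : ℕ) ≤ i → ∀ s',
        Vpol p R T pol (t + 1) j s' = Vstar p R T (t + 1) j s')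
    (hcur : ∀ j : Fin L, (j : ℕ) < i → Vpol p R T pol t j s = Vstar p R T t j s) :
    pol t s ∈ Aset p R T t i s ∧
      Vpol p R T pol t ⟨i, hiL⟩ s ≤ Vstar p R T t ⟨i, hiL⟩ s := by
  have hQpol : ∀ (j : Fin L), (j:ℕ) ≤ i →
      Qstar p R T t j s (pol t s) = Vpol p R T pol t j s := by
    intro j hj
    rw [vpol_eq p R T pol t ht j s, Qstar]
    congr 1
    refine Finset.sum_congr rfl fun s' _ => ?_
    rw [hnext j hj s']
  have hmem : ∀ j ≤ i, pol t s ∈ Aset p R T t j s := by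
    intro j
    induction j with
    | zero => exact fun _ => Finset.mem_univ _
    | succ k ih =>
      intro hik
      have hk : k < L := by omega
      have hki : k < i := by omega
      rw [Aset]
      simp only [hk, dif_pos, Finset.mem_filter]
      refine ⟨ih (by omega), fun a' ha' => ?_⟩
      have hQ : Qstar p R T t ⟨k,hk⟩ s (pol t s) = Vstar p R T t ⟨k,hk⟩ s := by
        rw [hQpol ⟨k,hk⟩ (le_of_lt hki), hcur ⟨k,hk⟩ hki]
      rw [hQ]
      exact le_vstar p R T t ht ⟨k,hk⟩ s ha'
  refine ⟨hmem i le_rfl, ?_⟩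
  rw [← hQpol ⟨i,hiL⟩ le_rfl]
  exact le_vstar p R T t ht ⟨i,hiL⟩ s (hmem i le_rfl)
end

section
/- Consider a finite-horizon multi-objective MDP with finite nonempty state type S, finite nonempty action type A, transition probabilities p, rewards R : Fin L → S → A → ℝ, and horizon T ≥ 1, with V* the values of the FLMDP backward recursion. Then at the last decision epoch t = T−1, for every deterministic Markov policy π and every state s, the vector (V^π_1(T−1,s), …, V^π_L(T−1,s)) = (R_1(s, π_{T−1}(s)), …, R_L(s, π_{T−1}(s))) is lexicographically less than or equal to (V*_1(T−1,s), …, V*_L(T−1,s)). -/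
open Classical

section auxLemmas
variable {S A : Type*} [Fintype S] [Fintype A] (p : S → A → S → ℝ)
  {L : ℕ} (R : Fin L → S → A → ℝ) (T : ℕ)

lemma Vstar_stop (i : Fin L) (s : S) : Vstar p R T T i s = 0 := by
  rw [Vstar]; simp

lemma Aset_nonempty [Nonempty A] (t : ℕ) : ∀ (j : ℕ) (s : S), (Aset p R T t j s).Nonempty
  | 0, s => ⟨Classical.arbitrary A, Finset.mem_univ _⟩
  | j+1, s => by
    rw [Aset]
    split
    · obtain ⟨b, hb, hmax⟩ := Finset.exists_max_image (Aset p R T t j s)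
        (Qstar p R T t ⟨j, ‹_›⟩ s) (Aset_nonempty t j s)
      exact ⟨b, Finset.mem_filter.2 ⟨hb, hmax⟩⟩
    · exact Aset_nonempty t j s

lemma natrec_eq_aset (t : ℕ) : ∀ (n : ℕ),
    (Nat.rec (motive := fun _ => S → Finset A) (fun _ => (Finset.univ : Finset A))
      (fun j prev s => (prev s).filter fun a =>
        if hj : j < L then
          ∀ a' ∈ prev s,
            (R ⟨j, hj⟩ s a' + ∑ s', p s a' s' * Vstar p R T (t + 1) ⟨j, hj⟩ s') ≤
              (R ⟨j, hj⟩ s a + ∑ s', p s a s' * Vstar p R T (t + 1) ⟨j, hj⟩ s')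
        else True) n) = Aset p R T t n
  | 0 => rfl
  | n+1 => by
    have ih := natrec_eq_aset t n
    conv_lhs => whnf
    rw [ih]
    funext s
    rw [Aset]
    by_cases hj : n < L
    · simp only [hj, dif_pos]
      rfl
    · simp [hj]

lemma Vstar_eq_sSup (t : ℕ) (ht : t < T) (i : Fin L) (s : S) :
    Vstar p R T t i s = sSup (Qstar p R T t i s '' ↑(Aset p R T t (i : ℕ) s)) := by
  rw [Vstar]
  beta_reduce
  rw [dif_pos ht, natrec_eq_aset]
  rfl

lemma Qstar_le_Vstar (t : ℕ) (ht : t < T) (i : Fin L) (s : S) {a : A}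
    (ha : a ∈ Aset p R T t (i : ℕ) s) :
    Qstar p R T t i s a ≤ Vstar p R T t i s := by
  rw [Vstar_eq_sSup p R T t ht]
  exact le_csSup ((Aset p R T t (i : ℕ) s).finite_toSet.image _).bddAbove ⟨a, ha, rfl⟩

lemma mem_succ_Q_eq [Nonempty A] (t : ℕ) (ht : t < T) {j : ℕ} (hj : j < L) (s : S) {a : A}
    (ha : a ∈ Aset p R T t (j + 1) s) :
    Qstar p R T t ⟨j, hj⟩ s a = Vstar p R T t ⟨j, hj⟩ s := by
  rw [Aset, dif_pos hj, Finset.mem_filter] at ha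
  refine le_antisymm (Qstar_le_Vstar p R T t ht ⟨j, hj⟩ s ha.1) ?_
  rw [Vstar_eq_sSup p R T t ht]
  refine csSup_le ((Finset.coe_nonempty.mpr (Aset_nonempty p R T t j s)).image _) ?_
  rintro x ⟨a', ha', rfl⟩
  exact ha.2 a' ha'

lemma not_mem_succ_Q_lt [Nonempty A] (t : ℕ) (ht : t < T) {j : ℕ} (hj : j < L) (s : S) {a : A}
    (ha : a ∈ Aset p R T t j s) (ha' : a ∉ Aset p R T t (j + 1) s) :
    Qstar p R T t ⟨j, hj⟩ s a < Vstar p R T t ⟨j, hj⟩ s := by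
  rw [Aset, dif_pos hj, Finset.mem_filter] at ha'
  push_neg at ha'
  obtain ⟨a', ha'1, hlt⟩ := ha' ha
  exact lt_of_lt_of_le hlt (Qstar_le_Vstar p R T t ht ⟨j, hj⟩ s ha'1)

end auxLemmas

/-- at the last decision epoch `t = T - 1`, for every policy `π` and state
`s`, the value vector equals `(R_1(s, π_{T-1}(s)), …, R_L(s, π_{T-1}(s)))` and is
lexicographically less than or equal to `(V*_1(T-1,s), …, V*_L(T-1,s))`. -/
theorem last_epoch_lex_le
    {S A : Type*} [Fintype S] [Fintype A] [Nonempty S] [Nonempty A]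
    (p : S → A → S → ℝ)
    (hp0 : ∀ s a s', 0 ≤ p s a s') (hp1 : ∀ s a, ∑ s', p s a s' = 1)
    {L : ℕ} (R : Fin L → S → A → ℝ) (T : ℕ) (hT : 1 ≤ T)
    (pol : ℕ → S → A) (s : S) :
    (∀ i : Fin L, Vpol p R T pol (T - 1) i s = R i s (pol (T - 1) s)) ∧
    toLex (fun i => Vpol p R T pol (T - 1) i s) ≤
      toLex (fun i => Vstar p R T (T - 1) i s) := by
  set b := pol (T - 1) s with hb
  have ht : T - 1 < T := by omega
  have hT1 : T - 1 + 1 = T := by omega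
  have hstop : ∀ (i : Fin L) (s' : S), Vpol p R T pol T i s' = 0 := by
    intro i s'; rw [Vpol]; simp
  have h1 : ∀ i : Fin L, Vpol p R T pol (T - 1) i s = R i s b := by
    intro i
    rw [Vpol]
    beta_reduce
    rw [dif_pos ht, hT1]
    simp [hstop, hb]
  have hQ : ∀ (i : Fin L) (a : A), Qstar p R T (T - 1) i s a = R i s a := by
    intro i a
    rw [Qstar, hT1]
    simp [Vstar_stop]
  refine ⟨h1, ?_⟩
  by_cases hex : ∃ j : ℕ, b ∉ Aset p R T (T - 1) (j + 1) s
  · set k := Nat.find hex with hkdef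
    have hk1 : b ∉ Aset p R T (T - 1) (k + 1) s := Nat.find_spec hex
    have hkmem : b ∈ Aset p R T (T - 1) k s := by
      match hke : k with
      | 0 => exact Finset.mem_univ _
      | m + 1 =>
        by_contra h
        exact Nat.find_min hex (by omega) h
    have hkL : k < L := by
      by_contra h
      have heq : Aset p R T (T - 1) (k + 1) s = Aset p R T (T - 1) k s := by
        rw [Aset, dif_neg (by omega)]
      exact hk1 (heq ▸ hkmem)
    refine le_of_lt ⟨⟨k, hkL⟩, ?_, ?_⟩
    · intro j hjk
      have hjmem : b ∈ Aset p R T (T - 1) ((j : ℕ) + 1) s := by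
        by_contra h
        exact absurd h (not_not.2 (not_not.1 (fun _ => (Nat.find_min hex hjk) h)))
      have h2 := mem_succ_Q_eq p R T (T - 1) ht j.isLt s hjmem
      simp only [Fin.eta] at h2
      show Vpol p R T pol (T - 1) j s = Vstar p R T (T - 1) j s
      rw [h1 j, ← hQ j b]
      exact h2
    · have hlt := not_mem_succ_Q_lt p R T (T - 1) ht hkL s hkmem hk1
      show Vpol p R T pol (T - 1) ⟨k, hkL⟩ s < Vstar p R T (T - 1) ⟨k, hkL⟩ s
      rw [h1 ⟨k, hkL⟩, ← hQ ⟨k, hkL⟩ b]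
      exact hlt
  · push_neg at hex
    refine le_of_eq (congrArg toLex (funext fun i => ?_))
    have h2 := mem_succ_Q_eq p R T (T - 1) ht i.isLt s (hex (i : ℕ))
    simp only [Fin.eta] at h2
    rw [h1 i, ← hQ i b]
    exact h2
end
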